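/- Let n, m ≥ 1, let p ∈ ℝⁿ and q ∈ ℝᵐ be probability vectors with strictly positive entries, let C ∈ ℝ^{n×m} be an arbitrary cost matrix, and let ε > 0. Then the function P ↦ Σ_{i,j} P_{ij} C_{ij} + ε Σ_{i,j} P_{ij} log P_{ij} (with the convention 0 log 0 = 0) has a unique minimizer P* over the transportation polytope Π(p,q); this minimizer has strictly positive entries, and there exist vectors u ∈ ℝ^n and v ∈ ℝ^m with strictly positive entries such that P*_{ij} = u_i exp(−C_{ij}/ε) v_j for all i, j. -/

import Mathlib

/-- The transportation polytope `Π(p,q)` of matrices with nonnegative entries and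
marginals `p` and `q`. -/
def InTransportPolytope {n m : ℕ} (p : Fin n → ℝ) (q : Fin m → ℝ)
    (P : Matrix (Fin n) (Fin m) ℝ) : Prop :=
  (∀ i j, 0 ≤ P i j) ∧ (∀ i, ∑ j, P i j = p i) ∧ (∀ j, ∑ i, P i j = q j)

/-- The entropy-regularized transport objective
`P ↦ Σ P_{ij} C_{ij} + ε Σ P_{ij} log P_{ij}` (with `0 log 0 = 0`, as `Real.log 0 = 0`). -/
noncomputable def entropicObjective {n m : ℕ} (C : Matrix (Fin n) (Fin m) ℝ) (ε : ℝ)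
    (P : Matrix (Fin n) (Fin m) ℝ) : ℝ :=
  (∑ i, ∑ j, P i j * C i j) + ε * ∑ i, ∑ j, P i j * Real.log (P i j)

/- ### Auxiliary lemmas -/

lemma entropicOT_cont_obj {n m : ℕ} (C : Matrix (Fin n) (Fin m) ℝ) (ε : ℝ) :
    Continuous (entropicObjective C ε) := by
  unfold entropicObjective
  apply Continuous.add
  · exact continuous_finset_sum _ fun i _ => continuous_finset_sum _ fun j _ =>
      Continuous.mul ((continuous_apply j).comp (continuous_apply i)) continuous_const
  · exact continuous_const.mul <| continuous_finset_sum _ fun i _ =>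
      continuous_finset_sum _ fun j _ =>
      Real.continuous_mul_log.comp ((continuous_apply j).comp (continuous_apply i))

lemma entropicOT_closed_poly {n m : ℕ} (p : Fin n → ℝ) (q : Fin m → ℝ) :
    IsClosed {P : Matrix (Fin n) (Fin m) ℝ | InTransportPolytope p q P} := by
  have h1 : IsClosed {P : Matrix (Fin n) (Fin m) ℝ | ∀ i j, 0 ≤ P i j} := by
    simp_rw [Set.setOf_forall]
    refine isClosed_iInter fun i => isClosed_iInter fun j => ?_
    exact isClosed_le continuous_const ((continuous_apply j).comp (continuous_apply i))
  have h2 : IsClosed {P : Matrix (Fin n) (Fin m) ℝ | ∀ i, ∑ j, P i j = p i} := by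
    simp_rw [Set.setOf_forall]
    refine isClosed_iInter fun i => ?_
    exact isClosed_eq (continuous_finset_sum _ fun j _ =>
      (continuous_apply j).comp (continuous_apply i)) continuous_const
  have h3 : IsClosed {P : Matrix (Fin n) (Fin m) ℝ | ∀ j, ∑ i, P i j = q j} := by
    simp_rw [Set.setOf_forall]
    refine isClosed_iInter fun j => ?_
    exact isClosed_eq (continuous_finset_sum _ fun i _ =>
      (continuous_apply j).comp (continuous_apply i)) continuous_const
  exact (h1.inter (h2.inter h3))

lemma entropicOT_compact_poly {n m : ℕ} (p : Fin n → ℝ) (q : Fin m → ℝ)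
    (hp : ∀ i, 0 < p i) (hps : ∑ i, p i = 1) :
    IsCompact {P : Matrix (Fin n) (Fin m) ℝ | InTransportPolytope p q P} := by
  refine IsCompact.of_isClosed_subset (isCompact_Icc (a := (fun _ _ => 0 : Matrix (Fin n) (Fin m) ℝ))
    (b := fun _ _ => 1)) (entropicOT_closed_poly p q) ?_
  rintro P ⟨h0, hrow, _⟩
  constructor
  · intro i; intro j; exact h0 i j
  · intro i; intro j
    have : P i j ≤ ∑ j', P i j' :=
      Finset.single_le_sum (fun j' _ => h0 i j') (Finset.mem_univ j)
    have hpi : p i ≤ 1 := by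
      rw [← hps]
      exact Finset.single_le_sum (fun i' _ => (hp i').le) (Finset.mem_univ i)
    calc P i j ≤ p i := by rw [← hrow i]; exact this
    _ ≤ 1 := hpi

lemma entropicOT_prodPlan_mem {n m : ℕ} (p : Fin n → ℝ) (q : Fin m → ℝ)
    (hp : ∀ i, 0 < p i) (hq : ∀ j, 0 < q j) (hps : ∑ i, p i = 1) (hqs : ∑ j, q j = 1) :
    InTransportPolytope p q (fun i j => p i * q j) := by
  refine ⟨fun i j => (mul_pos (hp i) (hq j)).le, fun i => ?_, fun j => ?_⟩
  · rw [← Finset.mul_sum, hqs, mul_one]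
  · rw [← Finset.sum_mul, hps, one_mul]

lemma entropicOT_min_pos {n m : ℕ} {p : Fin n → ℝ} {q : Fin m → ℝ}
    (hp : ∀ i, 0 < p i) (hq : ∀ j, 0 < q j) (hps : ∑ i, p i = 1) (hqs : ∑ j, q j = 1)
    (C : Matrix (Fin n) (Fin m) ℝ) {ε : ℝ} (hε : 0 < ε)
    {Pstar : Matrix (Fin n) (Fin m) ℝ} (hPs : InTransportPolytope p q Pstar)
    (hmin : ∀ P, InTransportPolytope p q P →
      entropicObjective C ε Pstar ≤ entropicObjective C ε P) :
    ∀ i j, 0 < Pstar i j := by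
  by_contra hcon
  push_neg at hcon
  obtain ⟨i0, j0, hz⟩ := hcon
  have hz0 : Pstar i0 j0 = 0 := le_antisymm hz (hPs.1 i0 j0)
  set f := entropicObjective C ε with hf
  set Q : Matrix (Fin n) (Fin m) ℝ := fun i j => p i * q j with hQdef
  have hQ : InTransportPolytope p q Q := by
    refine ⟨fun i j => (mul_pos (hp i) (hq j)).le, fun i => ?_, fun j => ?_⟩
    · rw [hQdef]; rw [← Finset.mul_sum, hqs, mul_one]
    · rw [hQdef]; rw [← Finset.sum_mul, hps, one_mul]
  set b : ℝ := p i0 * q j0 with hbdef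
  have hb : 0 < b := mul_pos (hp i0) (hq j0)
  set t : ℝ := min (Real.exp ((f Pstar - f Q - 1) / (ε * b))) (1/2) with htdef
  have ht0 : 0 < t := lt_min (Real.exp_pos _) (by norm_num)
  have ht1 : t ≤ 1/2 := min_le_right _ _
  have htlog : ε * b * Real.log t ≤ f Pstar - f Q - 1 := by
    have h1 : Real.log t ≤ (f Pstar - f Q - 1) / (ε * b) := by
      calc Real.log t ≤ Real.log (Real.exp ((f Pstar - f Q - 1) / (ε * b))) :=
            Real.log_le_log ht0 (min_le_left _ _)
        _ = _ := Real.log_exp _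
    calc ε * b * Real.log t ≤ ε * b * ((f Pstar - f Q - 1) / (ε * b)) := by
          exact mul_le_mul_of_nonneg_left h1 (mul_pos hε hb).le
      _ = f Pstar - f Q - 1 := by field_simp
  set Pt : Matrix (Fin n) (Fin m) ℝ := fun i j => (1 - t) * Pstar i j + t * Q i j with hPt
  have hPtmem : InTransportPolytope p q Pt := by
    obtain ⟨hP0, hPr, hPc⟩ := hPs
    obtain ⟨hQ0, hQr, hQc⟩ := hQ
    refine ⟨fun i j => add_nonneg (mul_nonneg (by linarith) (hP0 i j))
      (mul_nonneg ht0.le (hQ0 i j)), fun i => ?_, fun j => ?_⟩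
    · simp only [hPt, Finset.sum_add_distrib, ← Finset.mul_sum, hPr i, hQr i]; ring
    · simp only [hPt, Finset.sum_add_distrib, ← Finset.mul_sum, hPc j, hQc j]; ring
  -- pointwise entropy bound
  have hpt : ∀ i j, Pt i j * Real.log (Pt i j) ≤
      (1 - t) * (Pstar i j * Real.log (Pstar i j)) + t * (Q i j * Real.log (Q i j)) +
      (if i = i0 then (if j = j0 then t * b * Real.log t else 0) else 0) := by
    intro i j
    by_cases hij : i = i0 ∧ j = j0
    · obtain ⟨rfl, rfl⟩ := hij
      rw [if_pos rfl, if_pos rfl]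
      have hPtval : Pt i j = t * b := by simp [hPt, hz0, hbdef, hQdef]
      have hQb : Q i j = b := rfl
      rw [hPtval, hz0, hQb, Real.log_mul ht0.ne' hb.ne']
      simp only [zero_mul, mul_zero, add_zero, zero_add]
      exact le_of_eq (by ring)
    · have hcor : (if i = i0 then (if j = j0 then t * b * Real.log t else 0) else 0) = 0 := by
        rcases not_and_or.mp hij with h1 | h2
        · simp [h1]
        · simp [h2]
      rw [hcor, add_zero]
      have := Real.convexOn_mul_log.2 (Set.mem_Ici.2 (hPs.1 i j)) (Set.mem_Ici.2 (hQ.1 i j))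
        (by linarith : (0:ℝ) ≤ 1 - t) ht0.le (by ring)
      simpa [smul_eq_mul] using this
  -- total bound
  have hsum : f Pt ≤ (1 - t) * f Pstar + t * f Q + ε * (t * b * Real.log t) := by
    rw [hf]
    unfold entropicObjective
    have hlin : (∑ i, ∑ j, Pt i j * C i j) =
        (1 - t) * (∑ i, ∑ j, Pstar i j * C i j) + t * (∑ i, ∑ j, Q i j * C i j) := by
      simp only [hPt, Finset.mul_sum, ← Finset.sum_add_distrib]
      congr 1; ext i; congr 1; ext j; ring
    have hent : (∑ i, ∑ j, Pt i j * Real.log (Pt i j)) ≤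
        (1 - t) * (∑ i, ∑ j, Pstar i j * Real.log (Pstar i j)) +
        t * (∑ i, ∑ j, Q i j * Real.log (Q i j)) + t * b * Real.log t := by
      calc (∑ i, ∑ j, Pt i j * Real.log (Pt i j)) ≤
          ∑ i, ∑ j, ((1 - t) * (Pstar i j * Real.log (Pstar i j)) +
            t * (Q i j * Real.log (Q i j)) +
            (if i = i0 then (if j = j0 then t * b * Real.log t else 0) else 0)) :=
            Finset.sum_le_sum fun i _ => Finset.sum_le_sum fun j _ => hpt i j
        _ = _ := by
            have h1 : ∀ x : Fin n, (∑ j : Fin m, (if x = i0 then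
                (if j = j0 then t * b * Real.log t else 0) else 0)) =
                (if x = i0 then t * b * Real.log t else 0) := by
              intro x
              by_cases hx : x = i0
              · simp [hx, Finset.sum_ite_eq']
              · simp [hx]
            simp only [Finset.sum_add_distrib, ← Finset.mul_sum, h1, Finset.sum_ite_eq',
              Finset.mem_univ, if_true]
    calc (∑ i, ∑ j, Pt i j * C i j) + ε * (∑ i, ∑ j, Pt i j * Real.log (Pt i j)) ≤
        ((1 - t) * (∑ i, ∑ j, Pstar i j * C i j) + t * (∑ i, ∑ j, Q i j * C i j)) +
        ε * ((1 - t) * (∑ i, ∑ j, Pstar i j * Real.log (Pstar i j)) +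
          t * (∑ i, ∑ j, Q i j * Real.log (Q i j)) + t * b * Real.log t) := by
          rw [hlin]
          exact (add_le_add_iff_left _).2 (mul_le_mul_of_nonneg_left hent hε.le)
      _ = (1 - t) * entropicObjective C ε Pstar + t * entropicObjective C ε Q +
          ε * (t * b * Real.log t) := by unfold entropicObjective; ring
  have hlt : (1 - t) * f Pstar + t * f Q + ε * (t * b * Real.log t) < f Pstar := by
    nlinarith [ht0, htlog]
  exact absurd (hmin Pt hPtmem) (not_le.2 (lt_of_le_of_lt hsum hlt))

lemma entropicOT_unique_min {n m : ℕ} {p : Fin n → ℝ} {q : Fin m → ℝ}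
    (C : Matrix (Fin n) (Fin m) ℝ) {ε : ℝ} (hε : 0 < ε)
    {Pstar : Matrix (Fin n) (Fin m) ℝ} (hPs : InTransportPolytope p q Pstar)
    (hmin : ∀ P, InTransportPolytope p q P →
      entropicObjective C ε Pstar ≤ entropicObjective C ε P)
    {P : Matrix (Fin n) (Fin m) ℝ} (hP : InTransportPolytope p q P)
    (heq : entropicObjective C ε P = entropicObjective C ε Pstar) : P = Pstar := by
  by_contra hne
  have hij : ∃ i j, P i j ≠ Pstar i j := by
    by_contra h
    push_neg at h
    exact hne (by ext i j; exact h i j)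
  obtain ⟨i0, j0, hij⟩ := hij
  set M : Matrix (Fin n) (Fin m) ℝ := fun i j => (1/2) * P i j + (1/2) * Pstar i j with hM
  have hMmem : InTransportPolytope p q M := by
    obtain ⟨hP0, hPr, hPc⟩ := hP
    obtain ⟨hQ0, hQr, hQc⟩ := hPs
    refine ⟨fun i j => add_nonneg (mul_nonneg (by norm_num) (hP0 i j))
      (mul_nonneg (by norm_num) (hQ0 i j)),
      fun i => ?_, fun j => ?_⟩
    · simp only [hM, Finset.sum_add_distrib, ← Finset.mul_sum, hPr i, hQr i]; ring
    · simp only [hM, Finset.sum_add_distrib, ← Finset.mul_sum, hPc j, hQc j]; ring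
  have hent : (∑ i, ∑ j, M i j * Real.log (M i j)) <
      (1/2) * (∑ i, ∑ j, P i j * Real.log (P i j)) +
      (1/2) * (∑ i, ∑ j, Pstar i j * Real.log (Pstar i j)) := by
    have key : (∑ k : Fin n × Fin m, M k.1 k.2 * Real.log (M k.1 k.2)) <
        ∑ k : Fin n × Fin m, ((1/2) * (P k.1 k.2 * Real.log (P k.1 k.2)) +
          (1/2) * (Pstar k.1 k.2 * Real.log (Pstar k.1 k.2))) := by
      refine Finset.sum_lt_sum (fun k _ => ?_) ⟨(i0, j0), Finset.mem_univ _, ?_⟩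
      · have := Real.convexOn_mul_log.2 (Set.mem_Ici.2 (hP.1 k.1 k.2))
          (Set.mem_Ici.2 (hPs.1 k.1 k.2)) (by norm_num : (0:ℝ) ≤ 1/2)
          (by norm_num : (0:ℝ) ≤ 1/2) (by norm_num)
        simpa [hM, smul_eq_mul] using this
      · have := Real.strictConvexOn_mul_log.2 (Set.mem_Ici.2 (hP.1 i0 j0))
          (Set.mem_Ici.2 (hPs.1 i0 j0)) hij (by norm_num : (0:ℝ) < 1/2)
          (by norm_num : (0:ℝ) < 1/2) (by norm_num)
        simpa [hM, smul_eq_mul] using this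
    calc (∑ i, ∑ j, M i j * Real.log (M i j))
        = ∑ k : Fin n × Fin m, M k.1 k.2 * Real.log (M k.1 k.2) := by
          rw [Fintype.sum_prod_type]
      _ < _ := key
      _ = _ := by
          rw [Fintype.sum_prod_type]
          simp only [Finset.sum_add_distrib, ← Finset.mul_sum]
  have hlin : (∑ i, ∑ j, M i j * C i j) =
      (1/2) * (∑ i, ∑ j, P i j * C i j) + (1/2) * (∑ i, ∑ j, Pstar i j * C i j) := by
    simp only [hM, Finset.mul_sum, ← Finset.sum_add_distrib]
    congr 1; ext i; congr 1; ext j; ring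
  have hMlt : entropicObjective C ε M < entropicObjective C ε Pstar := by
    have : entropicObjective C ε M <
        (1/2) * entropicObjective C ε P + (1/2) * entropicObjective C ε Pstar := by
      unfold entropicObjective
      rw [hlin]
      nlinarith [hent, hε]
    rw [heq] at this
    linarith
  exact absurd (hmin M hMmem) (not_le.2 hMlt)

lemma entropicOT_lin_deriv (a d c : ℝ) : HasDerivAt (fun t => (a + t * d) * c) (d * c) 0 := by
  simpa using (((hasDerivAt_id (0:ℝ)).mul_const d).const_add a).mul_const c

lemma entropicOT_entropy_deriv (a d : ℝ) (ha : 0 < a) :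
    HasDerivAt (fun t => (a + t * d) * Real.log (a + t * d)) (d * (Real.log a + 1)) 0 := by
  have h1 : HasDerivAt (fun t : ℝ => a + t * d) d 0 := by
    simpa using ((hasDerivAt_id (0:ℝ)).mul_const d).const_add a
  have h2 : HasDerivAt (fun t : ℝ => Real.log (a + t * d)) (a⁻¹ * d) 0 := by
    have hne : a + 0 * d ≠ 0 := by simpa using ha.ne'
    have := (Real.hasDerivAt_log hne).comp 0 h1
    simpa [Function.comp_def] using this
  have h3 := h1.mul h2
  simp only [zero_mul, add_zero] at h3
  have h4 : d * (Real.log a + 1) = d * Real.log a + a * (a⁻¹ * d) := by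
    rw [mul_inv_cancel_left₀ ha.ne']; ring
  rw [h4]; exact h3

lemma entropicOT_cycle_sum {n m : ℕ} (i i' : Fin n) (j j' : Fin m) (X : Fin n → Fin m → ℝ) :
    (∑ k, ∑ l, (((if k = i then (1:ℝ) else 0) - (if k = i' then 1 else 0)) *
      ((if l = j then (1:ℝ) else 0) - (if l = j' then 1 else 0))) * X k l) =
    X i j - X i j' - X i' j + X i' j' := by
  have h : ∀ (a : Fin n) (b : Fin m),
      (∑ x, ∑ y, if x = a then if y = b then X x y else 0 else 0) = X a b := by
    intro a b
    have h2 : ∀ x, (∑ y, if x = a then if y = b then X x y else 0 else 0) =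
        (if x = a then X x b else 0) := fun x => by
      by_cases hx : x = a <;> simp [hx, Finset.sum_ite_eq']
    simp [h2, Finset.sum_ite_eq']
  simp only [sub_mul, mul_sub, ite_mul, one_mul, zero_mul, Finset.sum_sub_distrib,
    Finset.sum_ite_eq', Finset.mem_univ, if_true]
  simp only [h]
  ring

lemma entropicOT_gibbs_form {n m : ℕ} (hn : 1 ≤ n) (hm : 1 ≤ m) {p : Fin n → ℝ} {q : Fin m → ℝ}
    (C : Matrix (Fin n) (Fin m) ℝ) {ε : ℝ} (hε : 0 < ε)
    {Pstar : Matrix (Fin n) (Fin m) ℝ} (hPs : InTransportPolytope p q Pstar)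
    (hmin : ∀ P, InTransportPolytope p q P →
      entropicObjective C ε Pstar ≤ entropicObjective C ε P)
    (hpos : ∀ i j, 0 < Pstar i j) :
    ∃ (u : Fin n → ℝ) (v : Fin m → ℝ), (∀ i, 0 < u i) ∧ (∀ j, 0 < v j) ∧
      ∀ i j, Pstar i j = u i * Real.exp (-(C i j) / ε) * v j := by
  set L : Fin n → Fin m → ℝ := fun k l => C k l + ε * Real.log (Pstar k l) with hL
  -- first-order condition
  have key : ∀ (i i' : Fin n) (j j' : Fin m), L i j + L i' j' = L i j' + L i' j := by
    intro i i' j j'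
    set D : Fin n → Fin m → ℝ := fun k l =>
      ((if k = i then (1:ℝ) else 0) - (if k = i' then 1 else 0)) *
      ((if l = j then (1:ℝ) else 0) - (if l = j' then 1 else 0)) with hDdef
    have hDb : ∀ k l, |D k l| ≤ 1 := by
      intro k l
      rw [hDdef]
      rw [abs_mul]
      have h1 : |(if k = i then (1:ℝ) else 0) - (if k = i' then 1 else 0)| ≤ 1 := by
        split_ifs <;> norm_num
      have h2 : |(if l = j then (1:ℝ) else 0) - (if l = j' then 1 else 0)| ≤ 1 := by
        split_ifs <;> norm_num
      nlinarith [abs_nonneg ((if k = i then (1:ℝ) else 0) - (if k = i' then 1 else 0)),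
        abs_nonneg ((if l = j then (1:ℝ) else 0) - (if l = j' then 1 else 0))]
    have hrow : ∀ k, ∑ l, D k l = 0 := by
      intro k
      rw [hDdef, ← Finset.mul_sum]
      simp [Finset.sum_sub_distrib, Finset.sum_ite_eq', Finset.mem_univ]
    have hcol : ∀ l, ∑ k, D k l = 0 := by
      intro l
      have : ∀ k, D k l = ((if l = j then (1:ℝ) else 0) - (if l = j' then 1 else 0)) *
          ((if k = i then (1:ℝ) else 0) - (if k = i' then 1 else 0)) := fun k => by
        rw [hDdef]; ring
      simp only [this, ← Finset.mul_sum]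
      simp [Finset.sum_sub_distrib, Finset.sum_ite_eq', Finset.mem_univ]
    -- minimal entry
    obtain ⟨k0, -, hk0⟩ := Finset.exists_min_image Finset.univ
      (fun k : Fin n × Fin m => Pstar k.1 k.2) ⟨(i, j), Finset.mem_univ _⟩
    set c : ℝ := Pstar k0.1 k0.2 with hc
    have hc0 : 0 < c := hpos k0.1 k0.2
    have hcle : ∀ k l, c ≤ Pstar k l := fun k l => hk0 (k, l) (Finset.mem_univ _)
    -- perturbed matrices stay in the polytope
    have hmem : ∀ t : ℝ, |t| < c →
        InTransportPolytope p q (fun k l => Pstar k l + t * D k l) := by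
      intro t ht
      refine ⟨fun k l => ?_, fun k => ?_, fun l => ?_⟩
      · have h1 : |t * D k l| ≤ |t| := by
          rw [abs_mul]
          nlinarith [abs_nonneg t, hDb k l]
        show 0 ≤ Pstar k l + t * D k l
        nlinarith [hcle k l, neg_abs_le (t * D k l)]
      · rw [Finset.sum_add_distrib, ← Finset.mul_sum, hrow k, mul_zero, add_zero]
        exact hPs.2.1 k
      · rw [Finset.sum_add_distrib, ← Finset.mul_sum, hcol l, mul_zero, add_zero]
        exact hPs.2.2 l
    set g : ℝ → ℝ := fun t => (∑ k, ∑ l, (Pstar k l + t * D k l) * C k l) +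
      ε * ∑ k, ∑ l, (Pstar k l + t * D k l) * Real.log (Pstar k l + t * D k l) with hg
    have hgval : ∀ t, g t = entropicObjective C ε (fun k l => Pstar k l + t * D k l) := by
      intro t; rfl
    have hg0 : g 0 = entropicObjective C ε Pstar := by
      rw [hgval]
      congr 1
      funext k l
      ring
    have hloc : IsLocalMin g 0 := by
      refine Metric.eventually_nhds_iff.2 ⟨c, hc0, fun t ht => ?_⟩
      have ht' : |t| < c := by simpa [Real.dist_eq] using ht
      rw [hg0, hgval]
      exact hmin _ (hmem t ht')
    have hderiv : HasDerivAt g ((∑ k, ∑ l, D k l * C k l) +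
        ε * ∑ k, ∑ l, D k l * (Real.log (Pstar k l) + 1)) 0 := by
      rw [hg]
      exact (HasDerivAt.fun_sum fun k _ => HasDerivAt.fun_sum fun l _ =>
        entropicOT_lin_deriv _ _ _).add
        ((HasDerivAt.fun_sum fun k _ => HasDerivAt.fun_sum fun l _ =>
          entropicOT_entropy_deriv _ _ (hpos k l)).const_mul ε)
    have hzero := hloc.hasDerivAt_eq_zero hderiv
    have hGX : (∑ k, ∑ l, D k l * C k l) + ε * (∑ k, ∑ l, D k l * (Real.log (Pstar k l) + 1)) =
        ∑ k, ∑ l, D k l * (C k l + ε * (Real.log (Pstar k l) + 1)) := by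
      simp only [Finset.mul_sum, ← Finset.sum_add_distrib]
      congr 1; funext k; congr 1; funext l; ring
    rw [hGX] at hzero
    have hcyc := entropicOT_cycle_sum i i' j j'
      (fun k l => C k l + ε * (Real.log (Pstar k l) + 1))
    rw [hDdef] at hzero
    rw [hzero] at hcyc
    simp only [hL]
    linarith [hcyc]
  -- build u and v
  have hexp : ∀ i j, Pstar i j = Real.exp ((L i j - C i j) / ε) := by
    intro i j
    rw [hL]
    rw [show (C i j + ε * Real.log (Pstar i j) - C i j) / ε = Real.log (Pstar i j) by
      field_simp; ring]
    exact (Real.exp_log (hpos i j)).symm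
  set i0 : Fin n := ⟨0, hn⟩
  set j0 : Fin m := ⟨0, hm⟩
  refine ⟨fun i => Real.exp ((L i j0 - L i0 j0) / ε), fun j => Real.exp (L i0 j / ε),
    fun i => Real.exp_pos _, fun j => Real.exp_pos _, fun i j => ?_⟩
  rw [hexp i j, ← Real.exp_add, ← Real.exp_add]
  congr 1
  have hkey := key i i0 j j0
  field_simp
  linarith [hkey]

/-- **Cuturi: existence, uniqueness and Gibbs form of the entropic optimal plan.**
For strictly positive probability vectors `p`, `q`, any cost matrix `C` and `ε > 0`,
the entropy-regularized objective has a unique minimizer over `Π(p,q)`; it has strictly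
positive entries and has the scaling form `P*_{ij} = u_i exp(−C_{ij}/ε) v_j` with
positive vectors `u`, `v`. -/
theorem entropic_ot_unique_minimizer {n m : ℕ} (hn : 1 ≤ n) (hm : 1 ≤ m)
    (p : Fin n → ℝ) (q : Fin m → ℝ)
    (hp_pos : ∀ i, 0 < p i) (hq_pos : ∀ j, 0 < q j)
    (hp_sum : ∑ i, p i = 1) (hq_sum : ∑ j, q j = 1)
    (C : Matrix (Fin n) (Fin m) ℝ) (ε : ℝ) (hε : 0 < ε) :
    ∃ Pstar : Matrix (Fin n) (Fin m) ℝ,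
      InTransportPolytope p q Pstar ∧
      (∀ i j, 0 < Pstar i j) ∧
      -- Pstar is the unique minimizer
      (∀ P, InTransportPolytope p q P → entropicObjective C ε Pstar ≤ entropicObjective C ε P) ∧
      (∀ P, InTransportPolytope p q P →
        entropicObjective C ε P = entropicObjective C ε Pstar → P = Pstar) ∧
      -- Gibbs / Sinkhorn scaling form
      (∃ (u : Fin n → ℝ) (v : Fin m → ℝ), (∀ i, 0 < u i) ∧ (∀ j, 0 < v j) ∧
        ∀ i j, Pstar i j = u i * Real.exp (-(C i j) / ε) * v j) := by
  have hcompact := entropicOT_compact_poly p q hp_pos hp_sum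
  have hnonempty : {P : Matrix (Fin n) (Fin m) ℝ | InTransportPolytope p q P}.Nonempty :=
    ⟨fun i j => p i * q j, entropicOT_prodPlan_mem p q hp_pos hq_pos hp_sum hq_sum⟩
  obtain ⟨Pstar, hPsS, hminOn⟩ := hcompact.exists_isMinOn hnonempty
    ((entropicOT_cont_obj C ε).continuousOn)
  have hPs : InTransportPolytope p q Pstar := hPsS
  have hmin : ∀ P, InTransportPolytope p q P →
      entropicObjective C ε Pstar ≤ entropicObjective C ε P := fun P hP =>
    hminOn hP
  have hpos := entropicOT_min_pos hp_pos hq_pos hp_sum hq_sum C hε hPs hmin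
  refine ⟨Pstar, hPs, hpos, hmin, fun P hP heq => entropicOT_unique_min C hε hPs hmin hP heq,
    entropicOT_gibbs_form hn hm C hε hPs hmin hpos⟩
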